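/- The rewriting system generated by the moves α_i on binary trees is confluent, with the left comb I_n as the unique normal form among trees with n leaves. -/
import Mathlib


/-- Binary trees: expressions in a category with multiplication. -/
inductive BT : Type
  | leaf : BT
  | node : BT → BT → BT
deriving DecidableEq

namespace BT

/-- number of leaves (variables) of an expression -/
def leaves : BT → ℕ
  | leaf => 1
  | node l r => leaves l + leaves r

/-- `stab i t` is `t` right-stabilized `i` times: `(t ⊗_i I)`. -/
def stab : ℕ → BT → BT
  | 0, t => t
  | n+1, t => node (stab n t) leaf

/-- semi-normalized: of the form `(F ⊗ I)` -/
def IsSemi (t : BT) : Prop := ∃ f, t = node f leaf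

/-- fully normalized: a left comb, i.e. an iterated right stabilization of `I` -/
def IsComb (t : BT) : Prop := ∃ n, t = stab n leaf

/-- The move `α_i`: `α_0` reassociates `(H ⊗ (K ⊗ L))` to `((H ⊗ K) ⊗ L)` at the
root, and `α_{i+1} (N ⊗ I) = (α_i N) ⊗ I`. -/
inductive Alpha : ℕ → BT → BT → Prop
  | base (H K L : BT) : Alpha 0 (node H (node K L)) (node (node H K) L)
  | step {i N N'} : Alpha i N N' → Alpha (i+1) (node N leaf) (node N' leaf)

end BT

/-- one rewriting step: some move `α_i` applies -/
def BT.Step (E F : BT) : Prop := ∃ i, BT.Alpha i E F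

namespace BT

lemma one_le_leaves (E : BT) : 1 ≤ E.leaves := by
  induction E with
  | leaf => simp [leaves]
  | node l r ihl ihr => simp [leaves]; omega

lemma alpha_leaves {i E F} (h : Alpha i E F) : F.leaves = E.leaves := by
  induction h with
  | base H K L => simp [leaves]; ring
  | step _ ih => simp [leaves, ih]

lemma rtg_leaves {E F} (h : Relation.ReflTransGen Step E F) : F.leaves = E.leaves := by
  induction h with
  | refl => rfl
  | tail _ h ih => obtain ⟨i, h⟩ := h; rw [← ih, (alpha_leaves h)]

lemma lift {N N'} (h : Relation.ReflTransGen Step N N') :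
    Relation.ReflTransGen Step (node N leaf) (node N' leaf) := by
  induction h with
  | refl => rfl
  | tail _ h ih =>
    obtain ⟨i, h⟩ := h
    exact ih.tail ⟨i + 1, .step h⟩

lemma rotate (K : BT) : ∀ H : BT, ∃ N,
    Relation.ReflTransGen Step (node H K) (node N leaf) ∧
      N.leaves + 1 = H.leaves + K.leaves := by
  induction K with
  | leaf => intro H; exact ⟨H, .refl, rfl⟩
  | node K1 K2 ih1 ih2 =>
    intro H
    obtain ⟨N, hN, hl⟩ := ih2 (node H K1)
    refine ⟨N, .head ⟨0, .base H K1 K2⟩ hN, ?_⟩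
    simp [leaves] at hl ⊢; omega

lemma toComb : ∀ n (E : BT), E.leaves = n →
    Relation.ReflTransGen Step E (stab (n - 1) leaf) := by
  intro n
  induction n using Nat.strong_induction_on with
  | _ n ih =>
    intro E hE
    match E with
    | leaf => simp [leaves] at hE; subst hE; exact .refl
    | node H K =>
      obtain ⟨N, hN, hl⟩ := rotate K H
      have h1 := one_le_leaves H
      have h2 := one_le_leaves K
      have h3 := one_le_leaves N
      simp [leaves] at hE
      have hlt : N.leaves < n := by omega
      have := ih N.leaves hlt N rfl
      have : Relation.ReflTransGen Step (node N leaf)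
          (node (stab (N.leaves - 1) leaf) leaf) := lift this
      have heq : node (stab (N.leaves - 1) leaf) leaf = stab (n - 1) leaf := by
        have : n - 1 = (N.leaves - 1) + 1 := by omega
        rw [this]; rfl
      exact hN.trans (heq ▸ this)

lemma comb_no_step : ∀ n i F, ¬ Alpha i (stab n leaf) F := by
  intro n
  induction n with
  | zero => intro i F h; cases h
  | succ n ih =>
    intro i F h
    cases h with
    | step h => exact ih _ _ h

end BT


/-- The rewriting system generated by the `α_i` is confluent, and the left
combs are exactly the normal forms: a tree admits no move iff it is the left
comb on its number of leaves. -/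
theorem alpha_confluent_unique_normal_form :
    (∀ E F G : BT, Relation.ReflTransGen BT.Step E F →
      Relation.ReflTransGen BT.Step E G →
        ∃ H, Relation.ReflTransGen BT.Step F H ∧
          Relation.ReflTransGen BT.Step G H) ∧
    (∀ E : BT, (∀ i F, ¬ BT.Alpha i E F) ↔
      E = BT.stab (E.leaves - 1) BT.leaf) := by
  constructor
  · intro E F G hF hG
    refine ⟨BT.stab (E.leaves - 1) BT.leaf, ?_, ?_⟩
    · have := BT.rtg_leaves hF
      simpa [this] using BT.toComb F.leaves F rfl
    · have := BT.rtg_leaves hG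
      simpa [this] using BT.toComb G.leaves G rfl
  · intro E
    constructor
    · intro h
      induction E with
      | leaf => rfl
      | node H K ihH ihK =>
        match K with
        | .node K1 K2 => exact absurd (BT.Alpha.base H K1 K2) (h 0 _)
        | .leaf =>
          have hH : ∀ i F, ¬ BT.Alpha i H F := by
            intro i F hF
            exact h (i + 1) _ (BT.Alpha.step hF)
          have := ihH hH
          have h1 := BT.one_le_leaves H
          have hE : (BT.node H BT.leaf).leaves - 1 = (H.leaves - 1) + 1 := by
            simp [BT.leaves]; omega
          rw [hE]
          show BT.node H BT.leaf = BT.node (BT.stab (H.leaves - 1) BT.leaf) BT.leaf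
          rw [← this]
    · intro h i F
      rw [h]
      exact BT.comb_no_step _ i F
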